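/- The GAPG mechanism is individually rational: a truthful winner i has utility v_{i,sum} − v*_sum(P_i^close, n_k) ≥ v*_sum(N, n_k) − v*_sum(P_i^close, n_k) ≥ 0 (since the n_k-th largest n_k-sum valuation over all buyers is at least that over the subset P_i^close), and a truthful loser receives the nonnegative rebate v*_sum(N, n_k) − v*_sum(P_i^close, n_k) ≥ 0. -/

import Mathlib

open scoped Classical

/-- `kthLargest S f m` is the `m`-th largest (1-indexed) value of `f` on the finite set `S`,
with the convention that it is `0` if `S` has fewer than `m` elements. -/
noncomputable def kthLargest {α : Type*} (S : Finset α) (f : α → ℝ) (m : ℕ) : ℝ :=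
  if 1 ≤ m ∧ m ≤ S.card then ((S.val.map f).sort (· ≤ ·)).getD (S.card - m) 0 else 0

/-- The `n_k`-sum valuation of a buyer: the sum of her first `n_k = ⌊√k⌋` marginal values. -/
noncomputable def nkSum (k : ℕ) {n : ℕ} (v : Fin n → ℕ → ℝ) (i : Fin n) : ℝ :=
  ∑ l ∈ Finset.range (Nat.sqrt k), v i l

/-- The rank of buyer `i` among the informed buyers `A` by declared `n_k`-sum valuation,
ties broken in favor of smaller indices. -/
noncomputable def rank {n : ℕ} (A : Finset (Fin n)) (f : Fin n → ℝ) (i : Fin n) : ℕ :=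
  (A.filter (fun j => f i < f j ∨ (f j = f i ∧ j < i))).card

/-- GAPG winners: the (up to `n_k`) informed buyers with the highest declared `n_k`-sum
valuations, ties broken by index. -/
noncomputable def Wins (k : ℕ) {n : ℕ} (A : Finset (Fin n)) (v : Fin n → ℕ → ℝ) (i : Fin n) : Prop :=
  i ∈ A ∧ rank A (nkSum k v) i < Nat.sqrt k

/-- GAPG utility of buyer `i` with true marginal values `vtrue`, when `A` is the set of
informed buyers and `v'` the declared valuations: a winner gets `n_k` items and pays
`v*_sum(P_i^close, n_k)`; a loser receives the rebate
`v*_sum(N, n_k) − v*_sum(P_i^close, n_k)`. -/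
noncomputable def gapgUtil (k : ℕ) {n : ℕ} (A : Finset (Fin n)) (v' : Fin n → ℕ → ℝ)
    (i : Fin n) (vtrue : ℕ → ℝ) : ℝ :=
  if Wins k A v' i then
    (∑ l ∈ Finset.range (Nat.sqrt k), vtrue l)
      - kthLargest (A.filter (· < i)) (nkSum k v') (Nat.sqrt k)
  else
    kthLargest A (nkSum k v') (Nat.sqrt k)
      - kthLargest (A.filter (· < i)) (nkSum k v') (Nat.sqrt k)

/-- Counting bridge: counting in the sorted list of values equals a filtered card. -/
lemma countP_sort_eq {α : Type*} (S : Finset α) (f : α → ℝ) (p : ℝ → Prop) [DecidablePred p] :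
    ((S.val.map f).sort (· ≤ ·)).countP (fun x => decide (p x)) = (S.filter (fun a => p (f a))).card := by
  rw [← Multiset.coe_countP, Multiset.sort_eq, Multiset.countP_map]
  rfl

/-- In a sorted list, at least `L.length - idx` entries satisfy any predicate that holds
above `L[idx]`. -/
lemma count_ge_of_sorted (L : List ℝ) (hL : L.Pairwise (· ≤ ·)) (idx : ℕ) (hidx : idx < L.length)
    (p : ℝ → Prop) [DecidablePred p] (hp : ∀ x, L[idx] ≤ x → p x) :
    L.length - idx ≤ L.countP (fun x => decide (p x)) := by
  have hall : ∀ a ∈ L.drop idx, (fun x => decide (p x)) a = true := by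
    intro a ha
    obtain ⟨j, hj, rfl⟩ := List.mem_iff_getElem.1 ha
    have hj' : idx + j < L.length := by simp at hj; omega
    rw [List.getElem_drop]
    simp only [decide_eq_true_eq]
    apply hp
    rcases Nat.eq_zero_or_pos j with h0 | h0
    · subst h0; simp
    · exact List.pairwise_iff_getElem.1 hL idx (idx + j) hidx hj' (by omega)
  have h1 : (L.drop idx).countP (fun x => decide (p x)) = (L.drop idx).length :=
    List.countP_eq_length.2 hall
  have h2 := List.Sublist.countP_le (p := fun x => decide (p x)) (List.drop_sublist idx L)
  rw [h1, List.length_drop] at h2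
  exact h2

/-- In a sorted list, at most `L.length - (idx+1)` entries satisfy any predicate that forces
values strictly above `L[idx]`. -/
lemma count_le_of_sorted (L : List ℝ) (hL : L.Pairwise (· ≤ ·)) (idx : ℕ) (hidx : idx < L.length)
    (p : ℝ → Prop) [DecidablePred p] (hp : ∀ x, p x → L[idx] < x) :
    L.countP (fun x => decide (p x)) ≤ L.length - (idx + 1) := by
  conv_lhs => rw [← List.take_append_drop (idx + 1) L]
  rw [List.countP_append]
  have h0 : (L.take (idx + 1)).countP (fun x => decide (p x)) = 0 := by
    rw [List.countP_eq_zero]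
    intro a ha
    obtain ⟨j, hj, rfl⟩ := List.mem_iff_getElem.1 ha
    have hj' : j < L.length := by simp at hj; omega
    have hjle : j ≤ idx := by simp at hj; omega
    rw [List.getElem_take]
    simp only [decide_eq_true_eq]
    intro hpa
    have h1 := hp _ hpa
    have h2 : L[j] ≤ L[idx] := by
      rcases Nat.lt_or_ge j idx with h | h
      · exact List.pairwise_iff_getElem.1 hL j idx hj' hidx h
      · have : j = idx := by omega
        subst this; exact le_refl _
    linarith
  rw [h0, Nat.zero_add]
  calc (L.drop (idx + 1)).countP (fun x => decide (p x)) ≤ (L.drop (idx + 1)).length :=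
        List.countP_le_length
    _ = L.length - (idx + 1) := List.length_drop

/-- Representation of `kthLargest` as an entry of the sorted list. -/
lemma kthLargest_repr {α : Type*} (S : Finset α) (f : α → ℝ) (m : ℕ)
    (hm : 1 ≤ m) (hmS : m ≤ S.card) :
    ∃ h : S.card - m < ((S.val.map f).sort (· ≤ ·)).length,
      kthLargest S f m = ((S.val.map f).sort (· ≤ ·))[S.card - m] := by
  have hlen : ((S.val.map f).sort (· ≤ ·)).length = S.card := by
    rw [Multiset.length_sort, Multiset.card_map]; rfl
  have h : S.card - m < ((S.val.map f).sort (· ≤ ·)).length := by omega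
  exact ⟨h, by rw [kthLargest, if_pos ⟨hm, hmS⟩, List.getD_eq_getElem _ _ h]⟩

lemma kthLargest_nonneg {α : Type*} (S : Finset α) (f : α → ℝ) (m : ℕ)
    (hf : ∀ x ∈ S, 0 ≤ f x) : 0 ≤ kthLargest S f m := by
  by_cases h : 1 ≤ m ∧ m ≤ S.card
  · obtain ⟨hlt, heq⟩ := kthLargest_repr S f m h.1 h.2
    rw [heq]
    have hmem : ((S.val.map f).sort (· ≤ ·))[S.card - m] ∈ (S.val.map f).sort (· ≤ ·) :=
      List.getElem_mem _
    have hmem' : ((S.val.map f).sort (· ≤ ·))[S.card - m] ∈ S.val.map f :=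
      (Multiset.mem_sort _).1 hmem
    obtain ⟨x, hx, hfx⟩ := Multiset.mem_map.1 hmem'
    exact hfx ▸ hf x hx
  · rw [kthLargest, if_neg h]

/-- If at least `m` elements have value `≥ v`, then the `m`-th largest is `≥ v`. -/
lemma le_kthLargest {α : Type*} (S : Finset α) (f : α → ℝ) (m : ℕ) (v : ℝ)
    (hm : 1 ≤ m) (hc : m ≤ (S.filter (fun x => v ≤ f x)).card) :
    v ≤ kthLargest S f m := by
  have hmS : m ≤ S.card := le_trans hc (Finset.card_filter_le _ _)
  obtain ⟨hlt, heq⟩ := kthLargest_repr S f m hm hmS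
  rw [heq]
  by_contra hcon
  push_neg at hcon
  have key := count_le_of_sorted _ (Multiset.pairwise_sort _ _) _ hlt (fun x => v ≤ x)
    (fun x hx => lt_of_lt_of_le hcon hx)
  rw [countP_sort_eq] at key
  have hlen : ((S.val.map f).sort (· ≤ ·)).length = S.card := by
    rw [Multiset.length_sort, Multiset.card_map]; rfl
  rw [hlen] at key
  omega

/-- If fewer than `m` elements have value `> v` (and `v ≥ 0`), the `m`-th largest is `≤ v`. -/
lemma kthLargest_le {α : Type*} (S : Finset α) (f : α → ℝ) (m : ℕ) (v : ℝ)
    (hv : 0 ≤ v) (hc : (S.filter (fun x => v < f x)).card < m) :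
    kthLargest S f m ≤ v := by
  by_cases h : 1 ≤ m ∧ m ≤ S.card
  · obtain ⟨hlt, heq⟩ := kthLargest_repr S f m h.1 h.2
    rw [heq]
    by_contra hcon
    push_neg at hcon
    have key := count_ge_of_sorted _ (Multiset.pairwise_sort _ _) _ hlt (fun x => v < x)
      (fun x hx => lt_of_lt_of_le hcon hx)
    rw [countP_sort_eq] at key
    have hlen : ((S.val.map f).sort (· ≤ ·)).length = S.card := by
      rw [Multiset.length_sort, Multiset.card_map]; rfl
    rw [hlen] at key
    omega
  · rw [kthLargest, if_neg h]; exact hv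

/-- There are at least `m` elements whose value is `≥` the `m`-th largest. -/
lemma kthLargest_self_count {α : Type*} (S : Finset α) (f : α → ℝ) (m : ℕ)
    (hm : 1 ≤ m) (hmS : m ≤ S.card) :
    m ≤ (S.filter (fun x => kthLargest S f m ≤ f x)).card := by
  obtain ⟨hlt, heq⟩ := kthLargest_repr S f m hm hmS
  have key := count_ge_of_sorted _ (Multiset.pairwise_sort _ _) _ hlt
    (fun x => kthLargest S f m ≤ x) (fun x hx => heq ▸ hx)
  rw [countP_sort_eq] at key
  have hlen : ((S.val.map f).sort (· ≤ ·)).length = S.card := by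
    rw [Multiset.length_sort, Multiset.card_map]; rfl
  rw [hlen] at key
  omega

/-- Monotonicity of `kthLargest` in the set, for nonnegative valuations. -/
lemma kthLargest_mono {α : Type*} {S T : Finset α} (hST : S ⊆ T) (f : α → ℝ) (m : ℕ)
    (hf : ∀ x ∈ T, 0 ≤ f x) : kthLargest S f m ≤ kthLargest T f m := by
  by_cases h : 1 ≤ m ∧ m ≤ S.card
  · refine le_kthLargest T f m _ h.1 ?_
    calc m ≤ (S.filter (fun x => kthLargest S f m ≤ f x)).card :=
          kthLargest_self_count S f m h.1 h.2
      _ ≤ (T.filter (fun x => kthLargest S f m ≤ f x)).card :=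
          Finset.card_le_card (Finset.filter_subset_filter _ hST)
  · rw [kthLargest, if_neg h]
    exact kthLargest_nonneg T f m hf

/-- **Individual rationality of the GAPG mechanism.** -/
theorem gapg_individually_rational (n k : ℕ) (hk : 0 < k)
    (A : Finset (Fin n)) (v : Fin n → ℕ → ℝ)
    (hv : ∀ j, (∀ l, 0 ≤ v j l) ∧ ∀ l, l + 1 < k → v j (l + 1) ≤ v j l)
    (i : Fin n) (hi : i ∈ A) :
    (kthLargest (A.filter (· < i)) (nkSum k v) (Nat.sqrt k)
        ≤ kthLargest A (nkSum k v) (Nat.sqrt k)) ∧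
    (Wins k A v i → kthLargest A (nkSum k v) (Nat.sqrt k) ≤ nkSum k v i) ∧
    0 ≤ gapgUtil k A v i (v i) := by
  have hF : ∀ j ∈ A, 0 ≤ nkSum k v j := fun j _ =>
    Finset.sum_nonneg fun l _ => (hv j).1 l
  have h1 : kthLargest (A.filter (· < i)) (nkSum k v) (Nat.sqrt k)
      ≤ kthLargest A (nkSum k v) (Nat.sqrt k) :=
    kthLargest_mono (Finset.filter_subset _ _) _ _ hF
  have h2 : Wins k A v i → kthLargest A (nkSum k v) (Nat.sqrt k) ≤ nkSum k v i := by
    intro hW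
    refine kthLargest_le A (nkSum k v) (Nat.sqrt k) _ (hF i hi) ?_
    have hsub : A.filter (fun j => nkSum k v i < nkSum k v j) ⊆
        A.filter (fun j => nkSum k v i < nkSum k v j ∨ (nkSum k v j = nkSum k v i ∧ j < i)) := by
      intro x hx
      simp only [Finset.mem_filter] at hx ⊢
      exact ⟨hx.1, Or.inl hx.2⟩
    exact lt_of_le_of_lt (Finset.card_le_card hsub) hW.2
  refine ⟨h1, h2, ?_⟩
  rw [gapgUtil]
  split
  · next hW =>
    have h3 := h2 hW
    have : (∑ l ∈ Finset.range (Nat.sqrt k), v i l) = nkSum k v i := rfl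
    rw [this]
    linarith
  · linarith
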